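/- Let N ≥ 1, let A : ℝ → M_N(ℂ) be continuous and let J : ℝ → M_N(ℂ) be differentiable with J̇(t) = A(t)·J(t) − J(t)·A(t) for every t ∈ ℝ (a Lax pair). Then the characteristic polynomial of J(t) is independent of t: for all t ∈ ℝ, charpoly(J(t)) = charpoly(J(0)); in particular the eigenvalues of J(t) do not depend on t (the flow is isospectral). -/

import Mathlib

open Matrix

private lemma jacobi_sum {N : ℕ} (M M' : Matrix (Fin N) (Fin N) ℂ) :
    ∑ σ : Equiv.Perm (Fin N), ((Equiv.Perm.sign σ : ℤ) : ℂ) *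
      ∑ i, (∏ j ∈ Finset.univ.erase i, M (σ j) j) • M' (σ i) i
    = Matrix.trace (Matrix.adjugate M * M') := by
  simp_rw [Finset.mul_sum, smul_eq_mul]
  rw [Finset.sum_comm]
  have key : ∀ i : Fin N,
      (∑ σ : Equiv.Perm (Fin N), ((Equiv.Perm.sign σ : ℤ) : ℂ) *
        ((∏ j ∈ Finset.univ.erase i, M (σ j) j) * M' (σ i) i))
      = ((Matrix.adjugate M) *ᵥ (fun k => M' k i)) i := by
    intro i
    rw [← Matrix.cramer_eq_adjugate_mulVec, Matrix.cramer_apply, Matrix.det_apply']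
    refine Finset.sum_congr rfl fun σ _ => ?_
    have hprod : (∏ j, (M.updateCol i fun k => M' k i) (σ j) j)
        = M' (σ i) i * ∏ j ∈ Finset.univ.erase i, M (σ j) j := by
      rw [← Finset.mul_prod_erase Finset.univ _ (Finset.mem_univ i)]
      congr 1
      · simp [Matrix.updateCol_apply]
      · refine Finset.prod_congr rfl fun j hj => ?_
        rw [Matrix.updateCol_apply, if_neg (Finset.ne_of_mem_erase hj)]
    rw [hprod]; ring
  rw [Finset.sum_congr rfl fun i _ => key i]
  simp [Matrix.trace, Matrix.mul_apply, Matrix.mulVec, dotProduct, Matrix.diag]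

private lemma hasDerivAt_det' {N : ℕ} {F : ℝ → Matrix (Fin N) (Fin N) ℂ}
    {F' : Matrix (Fin N) (Fin N) ℂ} {t : ℝ}
    (h : ∀ i j, HasDerivAt (fun s => F s i j) (F' i j) t) :
    HasDerivAt (fun s => (F s).det) (Matrix.trace (Matrix.adjugate (F t) * F')) t := by
  have hform : (fun s => (F s).det) = fun s =>
      ∑ σ : Equiv.Perm (Fin N), ((Equiv.Perm.sign σ : ℤ) : ℂ) * ∏ i, F s (σ i) i := by
    funext s; rw [Matrix.det_apply']
  rw [hform, ← jacobi_sum (F t) F']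
  refine HasDerivAt.fun_sum fun σ _ => ?_
  exact (HasDerivAt.fun_finsetProd (u := Finset.univ)
    (f := fun i s => F s (σ i) i) (f' := fun i => F' (σ i) i)
    (fun i _ => h (σ i) i)).const_mul _

private lemma eval_charpoly' {N : ℕ} (M : Matrix (Fin N) (Fin N) ℂ) (x : ℂ) :
    M.charpoly.eval x = (x • (1 : Matrix (Fin N) (Fin N) ℂ) - M).det := by
  rw [Matrix.charpoly, ← Polynomial.coe_evalRingHom, RingHom.map_det]
  congr 1
  ext i j
  by_cases hij : i = j <;>
    simp [hij, Matrix.charmatrix_apply, Matrix.one_apply, Matrix.diagonal_apply,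
      Matrix.smul_apply]

private lemma trace_adj_commutator {N : ℕ} (x : ℂ) (Jm Am : Matrix (Fin N) (Fin N) ℂ) :
    Matrix.trace (Matrix.adjugate (x • 1 - Jm) * (Am * Jm - Jm * Am)) = 0 := by
  set B := Matrix.adjugate (x • 1 - Jm) with hB
  have hc : B * Jm = Jm * B := by
    have h1 : B * (x • 1 - Jm) = (x • 1 - Jm) * B := by
      rw [Matrix.adjugate_mul, Matrix.mul_adjugate]
    have h2 : x • B - B * Jm = x • B - Jm * B := by
      simpa [mul_sub, sub_mul, Matrix.mul_smul, Matrix.smul_mul] using h1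
    exact sub_right_injective h2
  have : Matrix.trace (B * Am * Jm) = Matrix.trace (B * Jm * Am) := by
    calc Matrix.trace (B * Am * Jm) = Matrix.trace (Jm * (B * Am)) :=
          (Matrix.trace_mul_comm _ _).symm
      _ = Matrix.trace (Jm * B * Am) := by rw [Matrix.mul_assoc]
      _ = Matrix.trace (B * Jm * Am) := by rw [hc]
  rw [mul_sub, Matrix.trace_sub, ← Matrix.mul_assoc, ← Matrix.mul_assoc, this, sub_self]

/-- A Lax pair flow `J̇ = A·J − J·A` on complex `N × N` matrices is isospectral:
the characteristic polynomial of `J(t)` is independent of `t`. -/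
theorem lax_pair_isospectral (N : ℕ) (hN : 1 ≤ N)
    (A J : ℝ → Matrix (Fin N) (Fin N) ℂ)
    (hA : ∀ i j, Continuous fun t => A t i j)
    (hJ : ∀ (t : ℝ) (i j : Fin N),
      HasDerivAt (fun s => J s i j) ((A t * J t - J t * A t) i j) t) :
    ∀ t : ℝ, (J t).charpoly = (J 0).charpoly := by
  intro t
  apply Polynomial.funext
  intro x
  rw [eval_charpoly', eval_charpoly']
  set f : ℝ → ℂ := fun s => (x • (1 : Matrix (Fin N) (Fin N) ℂ) - J s).det with hf
  have hder : ∀ s : ℝ, HasDerivAt f 0 s := by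
    intro s
    have h' : ∀ i j, HasDerivAt (fun r => (x • (1 : Matrix (Fin N) (Fin N) ℂ) - J r) i j)
        ((-(A s * J s - J s * A s)) i j) s := by
      intro i j
      simpa using (hJ s i j).const_sub ((x • (1 : Matrix (Fin N) (Fin N) ℂ)) i j)
    have hd := hasDerivAt_det' (F := fun r => x • (1 : Matrix (Fin N) (Fin N) ℂ) - J r)
      (F' := -(A s * J s - J s * A s)) (t := s) h'
    have hz : Matrix.trace (Matrix.adjugate (x • (1 : Matrix (Fin N) (Fin N) ℂ) - J s) *
        -(A s * J s - J s * A s)) = 0 := by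
      rw [mul_neg, Matrix.trace_neg, trace_adj_commutator, neg_zero]
    rwa [hz] at hd
  exact is_const_of_deriv_eq_zero (fun s => (hder s).differentiableAt)
    (fun s => (hder s).deriv) t 0
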